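/- For integers m ≥ 2, 0 ≤ q ≤ 2m, and t ≥ 0, set d = t(2m+1) + q + 1 and r = 2m(m+1)t + mq + ⌊mq/(2m+1)⌋. Then r = ⌊2m(m+1)(d-1)/(2m+1)⌋, and Σ_{k=0}^{m} (-1)^k C(2m+2,k) C(2m-1+r-kd, 2m-1) = Σ_{k=0}^{m} (-1)^k C(2m+2,k) C(m-1+⌊mq/(2m+1)⌋+(q+1)(m-k)+t(2m(m+1)-k(2m+1)), 2m-1), where C(a,b) = 0 for a < b. -/

import Mathlib

/-- For `m ≥ 2`, `0 ≤ q ≤ 2m`, `t ≥ 0`, with `d = t(2m+1)+q+1` and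
`r = 2m(m+1)t + mq + ⌊mq/(2m+1)⌋`: one has `r = ⌊2m(m+1)(d-1)/(2m+1)⌋` and the
alternating binomial sum identity rewriting `Δ²h_B(r)` as `P_{m,q}(t)`. -/
theorem stmt18 (m q t : ℕ) (hm : 2 ≤ m) (hq : q ≤ 2*m)
    (d r : ℕ) (hd : d = t*(2*m+1) + q + 1)
    (hr : r = 2*m*(m+1)*t + m*q + (m*q)/(2*m+1)) :
    (r : ℤ) = ⌊((2*m*(m+1)*(d-1) : ℕ) : ℚ) / ((2*m+1 : ℕ) : ℚ)⌋
      ∧ ∑ k ∈ Finset.range (m+1), (-1 : ℤ)^k * (Nat.choose (2*m+2) k : ℤ)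
            * (Nat.choose (2*m - 1 + r - k*d) (2*m-1) : ℤ)
        = ∑ k ∈ Finset.range (m+1), (-1 : ℤ)^k * (Nat.choose (2*m+2) k : ℤ)
            * (Nat.choose (m - 1 + (m*q)/(2*m+1) + (q+1)*(m-k)
                + t*(2*m*(m+1) - k*(2*m+1))) (2*m-1) : ℤ) := by
  constructor
  · have hd1 : 2*m*(m+1)*(d-1) = (2*m*(m+1)*t + m*q)*(2*m+1) + m*q := by
      have h : d - 1 = t*(2*m+1)+q := by omega
      rw [h]; ring
    rw [Rat.floor_natCast_div_natCast, ← Int.natCast_div, hd1,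
        Nat.add_comm ((2*m*(m+1)*t + m*q)*(2*m+1)) (m*q),
        Nat.add_mul_div_right _ _ (by omega : 0 < 2*m+1), hr]
    push_cast
    ring
  · refine Finset.sum_congr rfl fun k hk => ?_
    have hkm : k ≤ m := Nat.lt_succ_iff.mp (Finset.mem_range.mp hk)
    obtain ⟨j, rfl⟩ : ∃ j, m = k + j := ⟨m - k, by omega⟩
    subst hd hr
    congr 2
    have h1 : k + j - k = j := by omega
    have h2 : 2*(k+j)*(k+j+1) - k*(2*(k+j)+1) = k + 2*k*j + 2*j^2 + 2*j := by
      have aux : 2*(k+j)*(k+j+1) = (k + 2*k*j + 2*j^2 + 2*j) + k*(2*(k+j)+1) := by ring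
      omega
    rw [h1, h2]
    have hle : k * (t*(2*(k+j)+1) + q + 1)
        ≤ 2*(k+j) - 1 + (2*(k+j)*(k+j+1)*t + (k+j)*q + (k+j)*q/(2*(k+j)+1)) := by
      have hA : k * (t*(2*(k+j)+1) + q + 1) ≤ (k+j) * (t*(2*(k+j)+1) + q + 1) :=
        Nat.mul_le_mul_right _ (Nat.le_add_right k j)
      refine hA.trans ?_
      zify [(by omega : 1 ≤ 2*(k+j))]
      push_cast
      have hF : (0:ℤ) ≤ ((k:ℤ)+(j:ℤ))*(q:ℤ) / (2*((k:ℤ)+(j:ℤ))+1) :=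
        Int.ediv_nonneg (by positivity) (by positivity)
      nlinarith [mul_nonneg (mul_nonneg (Int.natCast_nonneg k) (Int.natCast_nonneg j)) (Int.natCast_nonneg t),
        mul_nonneg (mul_nonneg (Int.natCast_nonneg j) (Int.natCast_nonneg j)) (Int.natCast_nonneg t),
        mul_nonneg (Int.natCast_nonneg k) (Int.natCast_nonneg t),
        mul_nonneg (Int.natCast_nonneg j) (Int.natCast_nonneg t),
        mul_nonneg (Int.natCast_nonneg j) (Int.natCast_nonneg q),
        (by exact_mod_cast hm : (2:ℤ) ≤ (k:ℤ)+(j:ℤ)), hF]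
    congr 1
    zify [hle, (by omega : 1 ≤ 2*(k+j)), (by omega : 1 ≤ k+j)]
    push_cast
    ring
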